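/- Let A be a finite set and order A* by the embedding order ≤_e (u ≤_e v iff u is a subsequence of v). Then the set U(A*, ≤_e) of upward closed subsets of A*, partially ordered by set inclusion ⊆, has no ascending chain; that is, there is no sequence (C_i)_{i∈ℕ} of upward closed subsets of A* with C_i ⊊ C_{i+1} for all i ∈ ℕ. -/

import Mathlib

/-- Theorem 2(2), first part: the upward closed subsets of `(A*, ≤ₑ)` (embedding order,
i.e. the sublist order), ordered by inclusion, have no ascending chain. -/
theorem stmt_4 (A : Type*) [Fintype A] :
    ¬ ∃ C : ℕ → Set (List A),
      (∀ i : ℕ, ∀ u ∈ C i, ∀ v : List A, u.Sublist v → v ∈ C i) ∧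
      (∀ i : ℕ, C i ⊂ C (i + 1)) := by
  rintro ⟨C, hup, hchain⟩
  -- pick witnesses
  have hw : ∀ i : ℕ, ∃ w : List A, w ∈ C (i + 1) ∧ w ∉ C i := by
    intro i
    obtain ⟨hsub, hne⟩ := hchain i
    rcases Set.not_subset.1 hne with ⟨w, hw1, hw2⟩
    exact ⟨w, hw1, hw2⟩
  choose w hw1 hw2 using hw
  -- monotone
  have hmono : ∀ {i j : ℕ}, i ≤ j → C i ⊆ C j := by
    intro i j hij
    induction hij with
    | refl => exact subset_rfl
    | step h ih => exact ih.trans (hchain _).1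
  -- Higman
  have hpwo : (Set.univ : Set A).PartiallyWellOrderedOn (· = ·) :=
    Set.finite_univ.partiallyWellOrderedOn
  have hlist := hpwo.partiallyWellOrderedOn_sublistForall₂ (· = ·)
  obtain ⟨i, j, hij, hsf⟩ := hlist (fun n => ⟨w n, fun x _ => Set.mem_univ x⟩)
  have hsl : (w i).Sublist (w j) := by
    rcases List.sublistForall₂_iff.1 hsf with ⟨l, hforall, hsub⟩
    rw [List.forall₂_eq_eq_eq] at hforall; subst hforall; exact hsub
  have : w i ∈ C j := hmono hij (hw1 i)
  exact hw2 j (hup j (w i) this (w j) hsl)
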